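/- For all x ≥ 0, α > 0, β_n ≥ 1, φ, ψ ≥ 0: RL_n^{[α]}(t; x) = (1 + 2φ + 2x β_n) / (2(ψ + β_n)), where t denotes the identity function. -/

import Mathlib

open intervalIntegral

section BinomAux

open Filter Finset Real


/-- Summability of the dominating series. -/
lemma binom_u_summable (b r : ℝ) (hb : 0 ≤ b) (hr0 : 0 < r) (hr1 : r < 1) :
    Summable (fun i : ℕ =>
      (∏ j ∈ Finset.range i, (b + 1 + (j:ℝ))) * ((i:ℝ) * r ^ (i - 1)) / i.factorial) := by
  set u := fun i : ℕ =>
      (∏ j ∈ Finset.range i, (b + 1 + (j:ℝ))) * ((i:ℝ) * r ^ (i - 1)) / i.factorial with hu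
  have hP : ∀ i : ℕ, 0 < ∏ j ∈ Finset.range i, (b + 1 + (j:ℝ)) := by
    intro i
    apply Finset.prod_pos
    intro j _
    positivity
  have hupos : ∀ i : ℕ, 1 ≤ i → 0 < u i := by
    intro i hi
    have : (0:ℝ) < i := by exact_mod_cast hi
    have := hP i
    positivity
  set ρ := (1 + r) / 2 with hρ
  have hρ1 : ρ < 1 := by rw [hρ]; linarith
  have hρr : r < ρ := by rw [hρ]; linarith
  apply summable_of_ratio_norm_eventually_le hρ1
  -- key recurrence : u (n+1) = u n * ((b+1+n) * r / n) for n ≥ 1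
  obtain ⟨N, hN⟩ := exists_nat_ge ((b + 1) * r / (ρ - r))
  rw [Filter.eventually_atTop]
  refine ⟨N + 1, fun n hn => ?_⟩
  have hn1 : 1 ≤ n := le_trans (Nat.le_add_left 1 N) hn
  have hnpos : (0:ℝ) < n := by exact_mod_cast hn1
  have hrec : u (n + 1) = u n * ((b + 1 + n) * r / n) := by
    rw [hu]
    simp only [Finset.prod_range_succ, Nat.factorial_succ, Nat.add_sub_cancel]
    have h1 : n - 1 + 1 = n := Nat.succ_pred_eq_of_pos hn1
    have h2 : r ^ n = r ^ (n - 1) * r := by rw [← pow_succ, h1]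
    push_cast
    rw [h2]
    field_simp
  rw [hrec]
  have h1 : 0 < u n := hupos n hn1
  have h2 : (b + 1 + n) * r / n ≤ ρ := by
    rw [div_le_iff₀ hnpos]
    have hNn : ((b+1)*r/(ρ-r)) ≤ n := by
      calc ((b+1)*r/(ρ-r)) ≤ N := hN
        _ ≤ n := by exact_mod_cast le_trans (Nat.le_add_right N 1) hn
    rw [div_le_iff₀ (by linarith : (0:ℝ) < ρ - r)] at hNn
    nlinarith
  have h2' : 0 ≤ (b + 1 + n) * r / n := by positivity
  rw [Real.norm_of_nonneg (by positivity), Real.norm_of_nonneg h1.le]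
  calc u n * ((b + 1 + n) * r / n) ≤ u n * ρ := by
        exact mul_le_mul_of_nonneg_left h2 h1.le
    _ = ρ * u n := mul_comm _ _

noncomputable def bg (a : ℝ) (i : ℕ) (y : ℝ) : ℝ :=
  (∏ j ∈ Finset.range i, (a + (j:ℝ))) * y ^ i / i.factorial

noncomputable def bg' (a : ℝ) (i : ℕ) (y : ℝ) : ℝ :=
  (∏ j ∈ Finset.range i, (a + (j:ℝ))) * ((i:ℝ) * y ^ (i - 1)) / i.factorial

lemma binom_series (a t : ℝ) (ht0 : 0 ≤ t) (ht1 : t < 1) :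
    (Summable fun i : ℕ => (∏ j ∈ Finset.range i, (a + (j:ℝ))) * t ^ i / i.factorial) ∧
    ∑' i : ℕ, (∏ j ∈ Finset.range i, (a + (j:ℝ))) * t ^ i / i.factorial
      = (1 - t) ^ (-a) := by
  set r := (1 + t) / 2 with hrdef
  have hr0 : 0 < r := by rw [hrdef]; linarith
  have hr1 : r < 1 := by rw [hrdef]; linarith
  have htr : t < r := by rw [hrdef]; linarith
  set s : Set ℝ := Set.Ioo (-r) r with hs
  have hs_open : IsOpen s := isOpen_Ioo
  have hs_conn : IsPreconnected s := (convex_Ioo _ _).isPreconnected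
  have h0s : (0:ℝ) ∈ s := ⟨by linarith, hr0⟩
  have hts : t ∈ s := ⟨by linarith, htr⟩
  set u : ℕ → ℝ := fun i =>
      (∏ j ∈ Finset.range i, (|a| + 1 + (j:ℝ))) * ((i:ℝ) * r ^ (i - 1)) / i.factorial with hudef
  have hu : Summable u := binom_u_summable |a| r (abs_nonneg a) hr0 hr1
  have hderiv : ∀ i y, HasDerivAt (bg a i) (bg' a i y) y := by
    intro i y
    show HasDerivAt (fun y : ℝ => (∏ j ∈ Finset.range i, (a + (j:ℝ))) * y ^ i / i.factorial)
      ((∏ j ∈ Finset.range i, (a + (j:ℝ))) * ((i:ℝ) * y ^ (i - 1)) / i.factorial) y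
    exact ((hasDerivAt_pow i y).const_mul _).div_const _
  have hbound : ∀ i, ∀ y ∈ s, ‖bg' a i y‖ ≤ u i := by
    intro i y hy
    have hyr : |y| ≤ r := by
      rw [abs_le]; exact ⟨hy.1.le, hy.2.le⟩
    have e1 : |∏ j ∈ Finset.range i, (a + (j:ℝ))| ≤ ∏ j ∈ Finset.range i, (|a| + 1 + (j:ℝ)) := by
      calc |∏ j ∈ Finset.range i, (a + (j:ℝ))| = ∏ j ∈ Finset.range i, |a + (j:ℝ)| :=
          Finset.abs_prod _ _
        _ ≤ ∏ j ∈ Finset.range i, (|a| + 1 + (j:ℝ)) := by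
            apply Finset.prod_le_prod (fun j _ => abs_nonneg _)
            intro j _
            calc |a + (j:ℝ)| ≤ |a| + |(j:ℝ)| := abs_add_le _ _
              _ ≤ |a| + 1 + (j:ℝ) := by rw [Nat.abs_cast]; linarith
    have e2 : |y ^ (i-1)| ≤ r ^ (i-1) := by
      rw [abs_pow]; exact pow_le_pow_left₀ (abs_nonneg y) hyr _
    have hfact : (0:ℝ) < i.factorial := by positivity
    calc ‖bg' a i y‖
        = |∏ j ∈ Finset.range i, (a + (j:ℝ))| * ((i:ℝ) * |y ^ (i-1)|) / i.factorial := by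
          rw [bg', Real.norm_eq_abs, abs_div, abs_mul, abs_mul, Nat.abs_cast, Nat.abs_cast]
      _ ≤ (∏ j ∈ Finset.range i, (|a| + 1 + (j:ℝ))) * ((i:ℝ) * r ^ (i-1)) / i.factorial := by
          apply div_le_div_of_nonneg_right ?_ hfact.le |>.trans_eq rfl
          · exact mul_le_mul e1 (mul_le_mul_of_nonneg_left e2 i.cast_nonneg)
              (by positivity) (le_trans (abs_nonneg _) e1)
      _ = u i := rfl
  have hg0 : Summable (fun i => bg a i 0) := by
    apply summable_of_ne_finset_zero (s := {0})
    intro i hi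
    have : i ≠ 0 := by simpa using hi
    simp [bg, zero_pow this]
  have hsummable : ∀ y ∈ s, Summable (fun i => bg a i y) := fun y hy =>
    summable_of_summable_hasDerivAt_of_isPreconnected hu hs_open hs_conn
      (fun i y _ => hderiv i y) hbound h0s hg0 hy
  set f : ℝ → ℝ := fun y => ∑' i, bg a i y with hfdef
  have hfderiv : ∀ y ∈ s, HasDerivAt f (∑' i, bg' a i y) y := fun y hy =>
    hasDerivAt_tsum_of_isPreconnected hu hs_open hs_conn
      (fun i y _ => hderiv i y) hbound h0s hg0 hy
  have hg'summ : ∀ y ∈ s, Summable (fun i => bg' a i y) := fun y hy =>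
    Summable.of_norm_bounded hu (fun i => hbound i y hy)
  have hODE : ∀ y ∈ s, (1 - y) * (∑' i, bg' a i y) = a * f y := by
    intro y hy
    have hsum := hsummable y hy
    have hsum' := hg'summ y hy
    have h2 : ∀ i : ℕ, bg' a (i + 1) y = a * bg a i y + (i:ℝ) * bg a i y := by
      intro i
      rw [bg', bg]
      simp only [Finset.prod_range_succ, Nat.factorial_succ, Nat.add_sub_cancel]
      push_cast
      field_simp
    have h3 : ∀ i : ℕ, (i:ℝ) * bg a i y = y * bg' a i y := by
      intro i
      rcases Nat.eq_zero_or_pos i with h | h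
      · subst h; simp [bg, bg']
      · rw [bg, bg']
        have hyy : y ^ i = y ^ (i - 1) * y := by
          rw [← pow_succ, Nat.sub_add_cancel h]
        rw [hyy]
        ring
    have hsa : Summable (fun i => a * bg a i y) := hsum.mul_left a
    have hsy : Summable (fun i => y * bg' a i y) := hsum'.mul_left y
    have h1 : ∑' i, bg' a i y = ∑' i, bg' a (i + 1) y := by
      rw [Summable.tsum_eq_zero_add hsum']
      simp [bg']
    have h4 : ∑' i, bg' a (i + 1) y = a * f y + y * ∑' i, bg' a i y := by
      calc ∑' i, bg' a (i + 1) y = ∑' i, (a * bg a i y + y * bg' a i y) := by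
            exact tsum_congr (fun i => by rw [h2, h3])
        _ = (∑' i, a * bg a i y) + ∑' i, y * bg' a i y := Summable.tsum_add hsa hsy
        _ = a * f y + y * ∑' i, bg' a i y := by rw [tsum_mul_left, tsum_mul_left]
    have h5 := h1.trans h4
    linarith [h5]
  set h : ℝ → ℝ := fun y => f y * (1 - y) ^ a with hhdef
  have hhd : ∀ y ∈ s, HasDerivAt h 0 y := by
    intro y hy
    have hy1 : 0 < 1 - y := by have := hy.2; linarith
    have d1 : HasDerivAt (fun y : ℝ => 1 - y) (-1) y := by
      simpa using (hasDerivAt_id y).const_sub 1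
    have d2 : HasDerivAt (fun y : ℝ => (1 - y) ^ a) (-1 * a * (1 - y) ^ (a - 1)) y :=
      d1.rpow_const (Or.inl hy1.ne')
    have d3 : HasDerivAt (fun y => f y * (1 - y) ^ a)
        ((∑' i, bg' a i y) * (1 - y) ^ a + f y * (-1 * a * (1 - y) ^ (a - 1))) y :=
      (hfderiv y hy).mul d2
    convert d3 using 1
    have hsplit : (1 - y) ^ a = (1 - y) ^ (a - 1) * (1 - y) := by
      rw [Real.rpow_sub_one hy1.ne' a]
      field_simp
    rw [hsplit]
    have hO := hODE y hy
    linear_combination (-(1 - y) ^ (a - 1)) * hO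
  have hconst : ∀ z ∈ Set.Icc (0:ℝ) t, h z = h 0 := by
    intro z hz
    rcases eq_or_lt_of_le ht0 with h0t | h0t
    · have : z = 0 := le_antisymm (by simpa [← h0t] using hz.2) hz.1
      rw [this]
    · apply constant_of_has_deriv_right_zero (f := h) (a := 0) (b := t)
      · intro w hw
        have hws : w ∈ s := ⟨by linarith [hw.1], lt_of_le_of_lt hw.2 htr⟩
        exact (hhd w hws).continuousAt.continuousWithinAt
      · intro w hw
        have hws : w ∈ s := ⟨by linarith [hw.1], lt_of_lt_of_le hw.2 (le_refl t) |>.trans htr⟩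
        exact (hhd w hws).hasDerivWithinAt
      · exact hz
  have hf0 : f 0 = 1 := by
    show ∑' i, bg a i 0 = 1
    rw [Summable.tsum_eq_zero_add (hsummable 0 h0s)]
    have hz : ∀ i : ℕ, bg a (i + 1) 0 = 0 := by intro i; simp [bg]
    simp only [hz]
    simp [bg]
  have hft : f t * (1 - t) ^ a = 1 := by
    have := hconst t ⟨ht0, le_refl t⟩
    simp only [hhdef] at this
    rw [this, hf0, sub_zero, Real.one_rpow, one_mul]
  have h1t : 0 < 1 - t := by linarith
  have hftv : f t = (1 - t) ^ (-a) := by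
    have hX : (0:ℝ) < (1-t)^a := Real.rpow_pos_of_pos h1t a
    rw [Real.rpow_neg h1t.le]
    apply mul_right_cancel₀ hX.ne'
    rw [hft, inv_mul_cancel₀ hX.ne']
  exact ⟨hsummable t hts, hftv⟩

lemma binom_moment (a t : ℝ) (ht0 : 0 ≤ t) (ht1 : t < 1) :
    (Summable fun i : ℕ =>
      (i:ℝ) * ((∏ j ∈ Finset.range i, (a + (j:ℝ))) * t ^ i / i.factorial)) ∧
    ∑' i : ℕ, (i:ℝ) * ((∏ j ∈ Finset.range i, (a + (j:ℝ))) * t ^ i / i.factorial)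
      = a * t * (1 - t) ^ (-(a+1)) := by
  set g : ℕ → ℝ := fun i =>
    (i:ℝ) * ((∏ j ∈ Finset.range i, (a + (j:ℝ))) * t ^ i / i.factorial) with hg
  have key : ∀ i : ℕ, g (i + 1)
      = a * t * ((∏ j ∈ Finset.range i, (a + 1 + (j:ℝ))) * t ^ i / i.factorial) := by
    intro i
    rw [hg]
    simp only [Finset.prod_range_succ', Nat.factorial_succ]
    have hprod : ∀ j : ℕ, a + ((j:ℝ) + 1) = a + 1 + (j:ℝ) := by intro j; ring
    push_cast
    rw [Finset.prod_congr rfl (fun j _ => by push_cast; rw [hprod j])]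
    rw [pow_succ]
    field_simp
    ring
  have hQ := binom_series (a + 1) t ht0 ht1
  have hsum1 : Summable (fun i => g (i + 1)) := by
    rw [funext key]
    exact (hQ.1.mul_left (a * t))
  have hsumg : Summable g := by
    rw [← summable_nat_add_iff 1]
    exact hsum1
  constructor
  · exact hsumg
  · rw [Summable.tsum_eq_zero_add hsumg]
    have hg0 : g 0 = 0 := by simp [hg]
    rw [hg0, zero_add]
    calc ∑' i, g (i + 1)
        = ∑' i, a * t * ((∏ j ∈ Finset.range i, (a + 1 + (j:ℝ))) * t ^ i / i.factorial) :=
          tsum_congr key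
      _ = a * t * ∑' i, ((∏ j ∈ Finset.range i, (a + 1 + (j:ℝ))) * t ^ i / i.factorial) :=
          tsum_mul_left
      _ = a * t * (1 - t) ^ (-(a+1)) := by rw [hQ.2]

lemma integral_lin (β ψ φ : ℝ) (A B : ℝ) :
    ∫ u in A..B, (β * u + φ) / (β + ψ)
      = ((β * B ^ 2 / 2 + φ * B) - (β * A ^ 2 / 2 + φ * A)) / (β + ψ) := by
  have hF : ∀ u : ℝ, HasDerivAt (fun u : ℝ => (β * u ^ 2 / 2 + φ * u) / (β + ψ))
      ((β * u + φ) / (β + ψ)) u := by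
    intro u
    have h1 : HasDerivAt (fun u : ℝ => u ^ 2) (2 * u) u := by
      simpa using hasDerivAt_pow 2 u
    have h2 : HasDerivAt (fun u : ℝ => β * u ^ 2 / 2 + φ * u) (β * u + φ) u := by
      have h3 := (h1.const_mul β).div_const 2
      have h4 := (hasDerivAt_id u).const_mul φ
      exact (h3.add h4).congr_deriv (by ring)
    exact h2.div_const (β + ψ)
  have hcont : Continuous (fun u : ℝ => (β * u + φ) / (β + ψ)) := by
    continuity
  rw [intervalIntegral.integral_eq_sub_of_hasDerivAt (fun u _ => hF u)
    (hcont.intervalIntegrable A B)]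
  rw [sub_div]

end BinomAux


/-- First moment: `RL_n^{[α]}(t;x) = (1+2φ+2xβ)/(2(ψ+β))`. -/
theorem stmt_1 (x α β φ ψ : ℝ) (hx : 0 ≤ x) (hα : 0 < α) (hβ : 1 ≤ β)
    (hφ : 0 ≤ φ) (hψ : 0 ≤ ψ) :
    β * ∑' i : ℕ,
      (1 + β * α) ^ (-x / α) * ((α + 1 / β) ^ i)⁻¹ *
        ((∏ j ∈ Finset.range i, (x + (j : ℝ) * α)) / (i.factorial : ℝ)) *
        (∫ u in ((i : ℝ) / β)..(((i : ℝ) + 1) / β), (β * u + φ) / (β + ψ))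
      = (1 + 2 * φ + 2 * x * β) / (2 * (ψ + β)) := by
  have hβ0 : (0:ℝ) < β := lt_of_lt_of_le one_pos hβ
  have hβψ : (0:ℝ) < β + ψ := by linarith
  set a : ℝ := x / α with ha
  set T : ℝ := α * β / (1 + α * β) with hT
  have hpos : (0:ℝ) < 1 + α * β := by nlinarith
  have hT0 : 0 ≤ T := by rw [hT]; positivity
  have hT1 : T < 1 := by
    rw [hT, div_lt_one hpos]; linarith
  set c : ℕ → ℝ := fun i => (∏ j ∈ Finset.range i, (a + (j:ℝ))) * T ^ i / i.factorial with hc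
  set C : ℝ := (1 + β * α) ^ (-x / α) with hC
  -- rewrite each term
  have hterm : ∀ i : ℕ,
      C * ((α + 1 / β) ^ i)⁻¹ *
        ((∏ j ∈ Finset.range i, (x + (j : ℝ) * α)) / (i.factorial : ℝ)) *
        (∫ u in ((i : ℝ) / β)..(((i : ℝ) + 1) / β), (β * u + φ) / (β + ψ))
      = (C / (2 * β * (β + ψ))) * (2 * ((i:ℝ) * c i) + (1 + 2 * φ) * c i) := by
    intro i
    have hint : (∫ u in ((i : ℝ) / β)..(((i : ℝ) + 1) / β), (β * u + φ) / (β + ψ))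
        = (2 * (i:ℝ) + 1 + 2 * φ) / (2 * β * (β + ψ)) := by
      rw [integral_lin]
      field_simp
      ring
    have hcoef : ((α + 1 / β) ^ i)⁻¹ * (∏ j ∈ Finset.range i, (x + (j : ℝ) * α))
        = (∏ j ∈ Finset.range i, (a + (j:ℝ))) * T ^ i := by
      have h1 : ∀ j : ℕ, x + (j:ℝ) * α = α * (a + (j:ℝ)) := by
        intro j; rw [ha]; field_simp
      rw [Finset.prod_congr rfl (fun j _ => h1 j), Finset.prod_mul_distrib,
        Finset.prod_const, Finset.card_range]
      have h2 : ((α + 1 / β) ^ i)⁻¹ * α ^ i = T ^ i := by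
        rw [← inv_pow, ← mul_pow]
        congr 1
        rw [hT]
        field_simp
        ring
      calc ((α + 1 / β) ^ i)⁻¹ * (α ^ i * ∏ j ∈ Finset.range i, (a + (j:ℝ)))
          = (((α + 1 / β) ^ i)⁻¹ * α ^ i) * ∏ j ∈ Finset.range i, (a + (j:ℝ)) := by ring
        _ = (∏ j ∈ Finset.range i, (a + (j:ℝ))) * T ^ i := by rw [h2]; ring
    rw [hint]
    have : C * ((α + 1 / β) ^ i)⁻¹ *
        ((∏ j ∈ Finset.range i, (x + (j : ℝ) * α)) / (i.factorial : ℝ))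
        = C * ((((α + 1 / β) ^ i)⁻¹ * (∏ j ∈ Finset.range i, (x + (j : ℝ) * α)))
            / (i.factorial : ℝ)) := by ring
    rw [this, hcoef, hc]
    ring
  rw [tsum_congr hterm, tsum_mul_left]
  have hs1 : Summable (fun i : ℕ => 2 * ((i:ℝ) * c i)) :=
    ((binom_moment a T hT0 hT1).1.mul_left 2)
  have hs2 : Summable (fun i : ℕ => (1 + 2 * φ) * c i) :=
    ((binom_series a T hT0 hT1).1.mul_left (1 + 2 * φ))
  rw [Summable.tsum_add hs1 hs2, tsum_mul_left, tsum_mul_left,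
    (binom_moment a T hT0 hT1).2, (binom_series a T hT0 hT1).2]
  -- numeric evaluation
  have h1T : 1 - T = 1 / (1 + α * β) := by
    rw [hT]; field_simp; ring
  have hpow : ∀ b : ℝ, ((1:ℝ) - T) ^ (-b) = (1 + α * β) ^ b := by
    intro b
    rw [h1T, one_div, ← Real.rpow_neg_one (1 + α * β), ← Real.rpow_mul hpos.le]
    norm_num
  rw [hpow, hpow]
  set X : ℝ := (1 + α * β) ^ a with hX
  have hXpos : 0 < X := Real.rpow_pos_of_pos hpos a
  have hCX : C = X⁻¹ := by
    rw [hC, hX, show (1 + β * α) = 1 + α * β by ring, show -x / α = -(x / α) by ring,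
      ← ha, Real.rpow_neg hpos.le]
  have hY : (1 + α * β) ^ (a + 1) = X * (1 + α * β) := by
    rw [hX, Real.rpow_add_one hpos.ne' a]
  have haT : a * T * (1 + α * β) = x * β := by
    rw [ha, hT]
    field_simp
  rw [hY, hCX]
  have expand : a * T * (X * (1 + α * β)) = (a * T * (1 + α * β)) * X := by ring
  rw [expand, haT]
  field_simp
  ring
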